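/- For any base b ≥ 2 and any m ≥ 0, the number a_{b,2}(m) of admissible patterns of non-empty sub-cubes for (0,m,2)-nets in base b satisfies the recursion a_{b,2}(m) = (a_{b,2}(m-1))^b · (b!)^{b^{m-1}} for m ≥ 1, with a_{b,2}(0) = 1, and hence a_{b,2}(m) = (b!)^{m·b^{m-1}}. -/

import Mathlib

open Finset

/-- `P` is a `(0,m,d)`-net in base `b`: a set of `b^m` points of `[0,1)^d` such that
every elementary interval of volume `b^{-m}` contains exactly one point of `P`. -/
def IsNet (b m d : ℕ) (P : Finset (Fin d → ℝ)) : Prop :=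
  P.card = b ^ m ∧
  (∀ x ∈ P, ∀ j, x j ∈ Set.Ico (0 : ℝ) 1) ∧
  ∀ c : Fin d → ℕ, (∑ j, c j) = m →
    ∀ a : Fin d → ℕ, (∀ j, a j < b ^ c j) →
      ∃! x, x ∈ P ∧ ∀ j, (a j : ℝ) / (b : ℝ) ^ c j ≤ x j ∧ x j < ((a j : ℝ) + 1) / (b : ℝ) ^ c j

/-- The index of the sub-cube of side `b^{-m}` containing the point `x`. -/
noncomputable def cubeIdx (b m d : ℕ) (x : Fin d → ℝ) : Fin d → ℕ :=
  fun j => (⌊(b : ℝ) ^ m * x j⌋).toNat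

/-- A pattern `S` of sub-cubes (of side `b^{-m}`) is admissible if some `(0,m,d)`-net in
base `b` has exactly one point in each sub-cube of `S` and no point elsewhere. -/
def Admissible (b m d : ℕ) (S : Finset (Fin d → ℕ)) : Prop :=
  ∃ P : Finset (Fin d → ℝ), IsNet b m d P ∧ S = P.image (cubeIdx b m d) ∧ S.card = b ^ m

/-- combinatorial digital pattern -/
def DigPat (b m : ℕ) (S : Finset (Fin 2 → ℕ)) : Prop :=
  (∀ k ∈ S, ∀ j, k j < b ^ m) ∧
  ∀ c0 c1 : ℕ, c0 + c1 = m → ∀ a0 a1 : ℕ, a0 < b ^ c0 → a1 < b ^ c1 →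
    ∃! k, k ∈ S ∧ k 0 / b ^ (m - c0) = a0 ∧ k 1 / b ^ (m - c1) = a1

lemma existsUnique_image {α β : Type*} [DecidableEq β] (f : α → β) (S : Finset α) (hf : Set.InjOn f S)
    (p : β → Prop) :
    (∃! y, y ∈ S.image f ∧ p y) ↔ ∃! x, x ∈ S ∧ p (f x) := by
  constructor
  · rintro ⟨y, ⟨hy, hpy⟩, uy⟩
    obtain ⟨x, hx, rfl⟩ := Finset.mem_image.1 hy
    exact ⟨x, ⟨hx, hpy⟩, fun x' ⟨hx', hpx'⟩ =>
      hf hx' hx (uy _ ⟨Finset.mem_image_of_mem f hx', hpx'⟩)⟩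
  · rintro ⟨x, ⟨hx, hpx⟩, ux⟩
    refine ⟨f x, ⟨Finset.mem_image_of_mem f hx, hpx⟩, ?_⟩
    rintro y ⟨hy, hpy⟩
    obtain ⟨x', hx', rfl⟩ := Finset.mem_image.1 hy
    exact congrArg f (ux _ ⟨hx', hpy⟩)

/-- key floor lemma -/
lemma interval_iff_div (b m c a : ℕ) (hb : 1 ≤ b) (hc : c ≤ m) (x : ℝ) (hx0 : 0 ≤ x)
    (hx1 : x < 1) :
    ((a : ℝ) / (b : ℝ) ^ c ≤ x ∧ x < ((a : ℝ) + 1) / (b : ℝ) ^ c) ↔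
      (⌊(b : ℝ) ^ m * x⌋).toNat / b ^ (m - c) = a := by
  have hbR : (0:ℝ) < (b:ℝ) := by exact_mod_cast hb
  have hbc : (0:ℝ) < (b:ℝ) ^ c := pow_pos hbR c
  have hbm : (0:ℝ) < (b:ℝ) ^ m := pow_pos hbR m
  have hd : 0 < b ^ (m - c) := Nat.pow_pos hb
  have hfl0 : 0 ≤ ⌊(b : ℝ) ^ m * x⌋ := Int.floor_nonneg.2 (by positivity)
  set n : ℕ := (⌊(b : ℝ) ^ m * x⌋).toNat with hn
  have hnz : (n : ℤ) = ⌊(b : ℝ) ^ m * x⌋ := Int.toNat_of_nonneg hfl0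
  have hsplit : (b:ℝ) ^ m = (b:ℝ) ^ c * (b:ℝ) ^ (m - c) := by
    rw [← pow_add]; congr 1; omega
  constructor
  · rintro ⟨h1, h2⟩
    have hl : ((a * b ^ (m - c) : ℕ) : ℝ) ≤ (b:ℝ) ^ m * x := by
      push_cast
      rw [hsplit]
      calc (a:ℝ) * (b:ℝ) ^ (m-c) = ((a:ℝ) / (b:ℝ)^c) * ((b:ℝ)^c * (b:ℝ)^(m-c)) := by
            field_simp
        _ ≤ x * ((b:ℝ)^c * (b:ℝ)^(m-c)) := by
            apply mul_le_mul_of_nonneg_right h1; positivity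
        _ = (b:ℝ)^c * (b:ℝ)^(m-c) * x := by ring
    have hr : (b:ℝ) ^ m * x < (((a + 1) * b ^ (m - c) : ℕ) : ℝ) := by
      push_cast
      rw [hsplit]
      calc (b:ℝ)^c * (b:ℝ)^(m-c) * x = x * ((b:ℝ)^c * (b:ℝ)^(m-c)) := by ring
        _ < (((a:ℝ)+1) / (b:ℝ)^c) * ((b:ℝ)^c * (b:ℝ)^(m-c)) := by
            apply mul_lt_mul_of_pos_right h2; positivity
        _ = ((a:ℝ)+1) * (b:ℝ)^(m-c) := by field_simp
    have hl' : a * b ^ (m - c) ≤ n := by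
      have h2 : ((a * b ^ (m - c) : ℕ) : ℤ) ≤ ⌊(b:ℝ) ^ m * x⌋ := Int.le_floor.2 (by exact_mod_cast hl)
      rw [← hnz] at h2
      exact_mod_cast h2
    have hr' : n < (a + 1) * b ^ (m - c) := by
      have h2 : ⌊(b:ℝ) ^ m * x⌋ < (((a + 1) * b ^ (m - c) : ℕ) : ℤ) := Int.floor_lt.2 (by exact_mod_cast hr)
      rw [← hnz] at h2
      exact_mod_cast h2
    exact Nat.div_eq_of_lt_le hl' hr'
  · intro h
    have hdm := Nat.div_add_mod n (b ^ (m - c))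
    rw [h] at hdm
    have hmlt := Nat.mod_lt n hd
    have hl' : a * b ^ (m - c) ≤ n := by
      rw [← hdm, mul_comm]; exact Nat.le_add_right _ _
    have hr' : n < (a + 1) * b ^ (m - c) := by
      rw [← hdm]
      calc b ^ (m-c) * a + n % b ^ (m-c) < b ^ (m-c) * a + b ^ (m-c) :=
            Nat.add_lt_add_left hmlt _
        _ = (a + 1) * b ^ (m-c) := by ring
    have hlR : ((a * b ^ (m - c) : ℕ) : ℝ) ≤ (b:ℝ) ^ m * x := by
      calc ((a * b ^ (m - c) : ℕ) : ℝ) ≤ ((n : ℕ) : ℝ) := by exact_mod_cast hl'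
        _ = ((⌊(b : ℝ) ^ m * x⌋ : ℤ) : ℝ) := by exact_mod_cast hnz
        _ ≤ (b:ℝ) ^ m * x := Int.floor_le _
    have hrR : (b:ℝ) ^ m * x < (((a + 1) * b ^ (m - c) : ℕ) : ℝ) := by
      calc (b:ℝ) ^ m * x < ((⌊(b : ℝ) ^ m * x⌋ : ℤ) : ℝ) + 1 := Int.lt_floor_add_one _
        _ = ((n : ℕ) : ℝ) + 1 := by rw [← hnz]; norm_num
        _ ≤ (((a + 1) * b ^ (m - c) : ℕ) : ℝ) := by exact_mod_cast hr'
    constructor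
    · rw [div_le_iff₀ hbc]
      have hpos : (0:ℝ) < (b:ℝ) ^ (m - c) := pow_pos hbR _
      rw [hsplit] at hlR
      push_cast at hlR
      nlinarith
    · rw [lt_div_iff₀ hbc]
      have hpos : (0:ℝ) < (b:ℝ) ^ (m - c) := pow_pos hbR _
      rw [hsplit] at hrR
      push_cast at hrR
      nlinarith

lemma euc {α : Type*} {Q A B : α → Prop} (h : ∀ x, Q x → (A x ↔ B x)) :
    (∃! x, Q x ∧ A x) ↔ ∃! x, Q x ∧ B x := by
  constructor <;> rintro ⟨x, ⟨hq, ha⟩, ux⟩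
  · exact ⟨x, ⟨hq, (h x hq).1 ha⟩, fun y ⟨hy, hb⟩ => ux y ⟨hy, (h y hy).2 hb⟩⟩
  · exact ⟨x, ⟨hq, (h x hq).2 ha⟩, fun y ⟨hy, hb⟩ => ux y ⟨hy, (h y hy).1 hb⟩⟩

lemma admissible_iff (b m : ℕ) (hb : 1 ≤ b) (S : Finset (Fin 2 → ℕ)) :
    Admissible b m 2 S ↔ DigPat b m S := by
  classical
  have hbm : (0:ℝ) < (b:ℝ) ^ m := by positivity
  constructor
  · rintro ⟨P, ⟨hcard, hico, hnet⟩, rfl, hScard⟩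
    have hinj : Set.InjOn (cubeIdx b m 2) P :=
      Finset.injOn_of_card_image_eq (by rw [hScard, hcard])
    constructor
    · intro k hk j
      obtain ⟨x, hx, rfl⟩ := Finset.mem_image.1 hk
      have h0 := (hico x hx j).1
      have h1 := (hico x hx j).2
      show (⌊(b : ℝ) ^ m * x j⌋).toNat < b ^ m
      have hlt : ⌊(b : ℝ) ^ m * x j⌋ < (b ^ m : ℕ) := by
        apply Int.floor_lt.2
        push_cast
        nlinarith
      have h00 : 0 ≤ ⌊(b : ℝ) ^ m * x j⌋ := Int.floor_nonneg.2 (by nlinarith)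
      omega
    · intro c0 c1 hc a0 a1 ha0 ha1
      have hc0 : c0 ≤ m := by omega
      have hc1 : c1 ≤ m := by omega
      have hnet' := hnet ![c0, c1] (by simpa [Fin.sum_univ_two] using hc) ![a0, a1]
        (by intro j; fin_cases j <;> simpa)
      rw [existsUnique_image _ _ hinj]
      refine (euc ?_).1 hnet'
      intro x hx
      have h0 := hico x hx
      constructor
      · intro h
        constructor
        · have := (interval_iff_div b m c0 a0 hb hc0 (x 0) (h0 0).1 (h0 0).2).1
            (by simpa using h 0)
          simpa [cubeIdx] using this
        · have := (interval_iff_div b m c1 a1 hb hc1 (x 1) (h0 1).1 (h0 1).2).1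
            (by simpa using h 1)
          simpa [cubeIdx] using this
      · rintro ⟨h1, h2⟩ j
        fin_cases j
        · simpa using (interval_iff_div b m c0 a0 hb hc0 (x 0) (h0 0).1 (h0 0).2).2
            (by simpa [cubeIdx] using h1)
        · simpa using (interval_iff_div b m c1 a1 hb hc1 (x 1) (h0 1).1 (h0 1).2).2
            (by simpa [cubeIdx] using h2)
  · rintro ⟨hbd, hex⟩
    set f : (Fin 2 → ℕ) → (Fin 2 → ℝ) := fun k j => (k j : ℝ) / (b:ℝ) ^ m with hf
    have hfinj : Set.InjOn f S := by
      intro k _ k' _ h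
      funext j
      have h2 := congrFun h j
      simp only [hf] at h2
      field_simp at h2
      exact_mod_cast h2
    have hfix : ∀ k ∈ S, cubeIdx b m 2 (f k) = k := by
      intro k hk
      funext j
      show (⌊(b : ℝ) ^ m * ((k j : ℝ) / (b:ℝ) ^ m)⌋).toNat = k j
      rw [mul_div_cancel₀ _ (ne_of_gt hbm)]
      simp
    have hScard : S.card = b ^ m := by
      rw [← Finset.card_range (b ^ m)]
      apply Finset.card_bij (fun k _ => k 0)
      · intro k hk
        exact Finset.mem_range.2 (hbd k hk 0)
      · intro k hk k' hk' h
        obtain ⟨w, _, uw⟩ := hex m 0 (by omega) (k 0) 0 (hbd k hk 0) (by simp)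
        have h1 : k = w := uw k ⟨hk, by simp, Nat.div_eq_of_lt (hbd k hk 1)⟩
        have h2 : k' = w := uw k' ⟨hk', by simp [h], Nat.div_eq_of_lt (hbd k' hk' 1)⟩
        rw [h1, h2]
      · intro a ha
        obtain ⟨w, ⟨hw, hw0, _⟩, _⟩ := hex m 0 (by omega) a 0 (Finset.mem_range.1 ha) (by simp)
        exact ⟨w, hw, by simpa using hw0⟩
    set P : Finset (Fin 2 → ℝ) := S.image f with hP
    have hPcard : P.card = b ^ m := by
      rw [hP, Finset.card_image_of_injOn hfinj, hScard]
    have hSP : S = P.image (cubeIdx b m 2) := by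
      have himg : S.image (cubeIdx b m 2 ∘ f) = S.image id :=
        Finset.image_congr (fun k hk => hfix k hk)
      rw [hP, Finset.image_image, himg, Finset.image_id]
    refine ⟨P, ⟨hPcard, ?_, ?_⟩, hSP, hScard⟩
    · rintro x hx j
      obtain ⟨k, hk, rfl⟩ := Finset.mem_image.1 hx
      constructor
      · positivity
      · show (k j : ℝ) / (b:ℝ) ^ m < 1
        rw [div_lt_one hbm]
        exact_mod_cast hbd k hk j
    · intro c hc a ha
      rw [hP, existsUnique_image _ _ hfinj]
      have hc' : c 0 + c 1 = m := by rw [← hc, Fin.sum_univ_two]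
      have hc0 : c 0 ≤ m := by omega
      have hc1 : c 1 ≤ m := by omega
      refine (euc ?_).2 (hex (c 0) (c 1) hc' (a 0) (a 1) (ha 0) (ha 1))
      intro k hk
      have hb0 : (0:ℝ) ≤ (k 0 : ℝ) / (b:ℝ) ^ m := by positivity
      have hb0' : (k 0 : ℝ) / (b:ℝ) ^ m < 1 := by
        rw [div_lt_one hbm]; exact_mod_cast hbd k hk 0
      have hb1 : (0:ℝ) ≤ (k 1 : ℝ) / (b:ℝ) ^ m := by positivity
      have hb1' : (k 1 : ℝ) / (b:ℝ) ^ m < 1 := by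
        rw [div_lt_one hbm]; exact_mod_cast hbd k hk 1
      have e0 := interval_iff_div b m (c 0) (a 0) hb hc0 _ hb0 hb0'
      have e1 := interval_iff_div b m (c 1) (a 1) hb hc1 _ hb1 hb1'
      have hfix0 : (⌊(b : ℝ) ^ m * ((k 0 : ℝ) / (b:ℝ) ^ m)⌋).toNat = k 0 := by
        have := congrFun (hfix k hk) 0; simpa [cubeIdx, hf] using this
      have hfix1 : (⌊(b : ℝ) ^ m * ((k 1 : ℝ) / (b:ℝ) ^ m)⌋).toNat = k 1 := by
        have := congrFun (hfix k hk) 1; simpa [cubeIdx, hf] using this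
      rw [hfix0] at e0
      rw [hfix1] at e1
      constructor
      · intro h
        exact ⟨(e0.1 (h 0)).symm ▸ rfl, (e1.1 (h 1)).symm ▸ rfl⟩
      · rintro ⟨h1, h2⟩ j
        fin_cases j
        · exact e0.2 h1
        · exact e1.2 h2

/- ### arithmetic helpers -/

lemma pfDivAdd (B a r : ℕ) (hB : 0 < B) (hr : r < B) : (a * B + r) / B = a := by
  rw [mul_comm, Nat.mul_add_div hB, Nat.div_eq_of_lt hr, add_zero]

lemma pfModAdd (B a r : ℕ) (hr : r < B) : (a * B + r) % B = r := by
  rw [mul_comm, Nat.mul_add_mod, Nat.mod_eq_of_lt hr]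

lemma div_pow_add (b m d a r : ℕ) (hd : d ≤ m) (hb : 0 < b) :
    (a * b ^ m + r) / b ^ (m - d) = a * b ^ d + r / b ^ (m - d) := by
  have h : a * b ^ m + r = r + b ^ (m - d) * (a * b ^ d) := by
    rw [show b ^ (m - d) * (a * b ^ d) = a * (b ^ (m - d) * b ^ d) by ring, ← pow_add]
    rw [show m - d + d = m by omega]
    ring
  rw [h, Nat.add_mul_div_left _ _ (pow_pos hb _), add_comm]

lemma div_pow_succ (b q s e : ℕ) (hb : 0 < b) (hs : s < b) :
    (q * b + s) / b ^ (e + 1) = q / b ^ e := by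
  rw [pow_succ', ← Nat.div_div_eq_div_mul, pfDivAdd b q s hb hs]

lemma base_eq (B α β α' β' : ℕ) (hB : 0 < B) (hβ : β < B) (hβ' : β' < B)
    (h : α * B + β = α' * B + β') : α = α' ∧ β = β' :=
  ⟨by rw [← pfDivAdd B α β hB hβ, h, pfDivAdd B α' β' hB hβ'],
   by rw [← pfModAdd B α β hβ, h, pfModAdd B α' β' hβ']⟩

lemma encode_lt (x y B C : ℕ) (hx : x < B) (hy : y < C) : x * C + y < B * C :=
  calc x * C + y < x * C + C := by omega
    _ = (x + 1) * C := by ring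
    _ ≤ B * C := Nat.mul_le_mul_right _ hx

/- ### the encoding map -/

def enc2 (X Y : ℕ) : Fin 2 → ℕ := fun j => if j = 0 then X else Y

@[simp] lemma enc2_zero (X Y : ℕ) : enc2 X Y 0 = X := rfl
@[simp] lemma enc2_one (X Y : ℕ) : enc2 X Y 1 = Y := rfl

def psi (b m : ℕ) (hbm : 0 < b ^ m) (T : Fin b → Finset (Fin 2 → ℕ))
    (g : Fin (b ^ m) → Fin b → Fin b) : Finset (Fin 2 → ℕ) :=
  Finset.univ.biUnion fun a : Fin b =>
    (T a).image fun t =>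
      enc2 ((a : ℕ) * b ^ m + t 0) (t 1 * b + (g ⟨t 1 % b ^ m, Nat.mod_lt _ hbm⟩ a : ℕ))

lemma mem_psi (b m : ℕ) (hbm : 0 < b ^ m) (T : Fin b → Finset (Fin 2 → ℕ))
    (g : Fin (b ^ m) → Fin b → Fin b) (k : Fin 2 → ℕ) :
    k ∈ psi b m hbm T g ↔ ∃ a : Fin b, ∃ t ∈ T a,
      k = enc2 ((a : ℕ) * b ^ m + t 0) (t 1 * b + (g ⟨t 1 % b ^ m, Nat.mod_lt _ hbm⟩ a : ℕ)) := by
  simp only [psi, Finset.mem_biUnion, Finset.mem_univ, true_and, Finset.mem_image]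
  constructor
  · rintro ⟨a, t, ht, rfl⟩; exact ⟨a, t, ht, rfl⟩
  · rintro ⟨a, t, ht, rfl⟩; exact ⟨a, t, ht, rfl⟩

lemma fin2_ext {k k' : Fin 2 → ℕ} (h0 : k 0 = k' 0) (h1 : k 1 = k' 1) : k = k' := by
  funext j; fin_cases j <;> assumption

lemma psi_digPat (b m : ℕ) (hb : 1 ≤ b) (hbm : 0 < b ^ m)
    (T : Fin b → Finset (Fin 2 → ℕ)) (g : Fin (b ^ m) → Fin b → Fin b)
    (hT : ∀ a, DigPat b m (T a)) (hg : ∀ q, Function.Bijective (g q)) :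
    DigPat b (m + 1) (psi b m hbm T g) := by
  have hbd : ∀ k ∈ psi b m hbm T g, ∀ j, k j < b ^ (m + 1) := by
    intro k hk j
    obtain ⟨a, t, ht, rfl⟩ := (mem_psi b m hbm T g k).1 hk
    have ht0 := (hT a).1 t ht 0
    have ht1 := (hT a).1 t ht 1
    fin_cases j
    · simp only [Fin.zero_eta, Fin.isValue, id_eq, enc2_zero]
      rw [pow_succ']
      exact encode_lt _ _ _ _ a.isLt ht0
    · simp only [Fin.mk_one, Fin.isValue, id_eq, enc2_one]
      rw [pow_succ]
      exact encode_lt _ _ _ _ ht1 (g _ a).isLt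
  refine ⟨hbd, ?_⟩
  intro c0 c1 hc a0 a1 ha0 ha1
  rcases Nat.eq_zero_or_pos c0 with h0 | h0
  · -- case c0 = 0, c1 = m+1
    subst h0
    have hc1 : c1 = m + 1 := by omega
    subst hc1
    have ha0' : a0 = 0 := by simpa using ha0
    subst ha0'
    have hq : a1 / b < b ^ m := by
      rw [Nat.div_lt_iff_lt_mul hb, ← pow_succ]; exact ha1
    have hs : a1 % b < b := Nat.mod_lt _ hb
    obtain ⟨af, haf⟩ := (hg ⟨a1 / b, hq⟩).2 ⟨a1 % b, hs⟩
    obtain ⟨t, ⟨htm, ht0, ht1⟩, htu⟩ :=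
      (hT af).2 0 m (by omega) 0 (a1 / b) (by simpa using Nat.one_pos) hq
    have ht1' : t 1 = a1 / b := by simpa using ht1
    have ht1m : t 1 % b ^ m = t 1 := Nat.mod_eq_of_lt ((hT af).1 t htm 1)
    have hgval : (g ⟨t 1 % b ^ m, Nat.mod_lt _ hbm⟩ af : ℕ) = a1 % b := by
      have : (⟨t 1 % b ^ m, Nat.mod_lt _ hbm⟩ : Fin (b ^ m)) = ⟨a1 / b, hq⟩ := by
        apply Fin.ext; simp [ht1', Nat.mod_eq_of_lt hq]
      rw [this, haf]
    refine ⟨_, ⟨(mem_psi b m hbm T g _).2 ⟨af, t, htm, rfl⟩, ?_, ?_⟩, ?_⟩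
    · rw [enc2_zero, Nat.sub_zero]
      apply Nat.div_eq_of_lt
      rw [pow_succ']
      exact encode_lt _ _ _ _ af.isLt ((hT af).1 t htm 0)
    · rw [enc2_one, Nat.sub_self, pow_zero, Nat.div_one, hgval, ht1', mul_comm]
      exact Nat.div_add_mod a1 b
    · rintro k' ⟨hk', hk'0, hk'1⟩
      obtain ⟨a', t', ht', rfl⟩ := (mem_psi b m hbm T g k').1 hk'
      rw [enc2_one, Nat.sub_self, pow_zero, Nat.div_one] at hk'1
      -- hk'1 : t' 1 * b + g .. a' = a1
      have hsplit := base_eq b (t' 1) (g ⟨t' 1 % b ^ m, Nat.mod_lt _ hbm⟩ a' : ℕ)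
        (a1 / b) (a1 % b) hb (g _ a').isLt hs
        (by rw [hk'1, mul_comm]; exact (Nat.div_add_mod a1 b).symm)
      have ht'1m : (⟨t' 1 % b ^ m, Nat.mod_lt _ hbm⟩ : Fin (b ^ m)) = ⟨a1 / b, hq⟩ := by
        apply Fin.ext
        simp [hsplit.1, Nat.mod_eq_of_lt hq]
      have ha' : a' = af := by
        apply (hg ⟨a1 / b, hq⟩).1
        rw [haf, ← ht'1m]
        exact Fin.ext hsplit.2
      rw [ha'] at ht'
      have ht'eq : t' = t := by
        apply htu
        refine ⟨ht', ?_, ?_⟩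
        · rw [Nat.sub_zero]; exact Nat.div_eq_of_lt ((hT af).1 t' ht' 0)
        · simpa using hsplit.1
      rw [ht'eq, ha']
  · -- case c0 = d + 1
    obtain ⟨d, rfl⟩ : ∃ d, c0 = d + 1 := ⟨c0 - 1, by omega⟩
    have hdc : d + c1 = m := by omega
    have hc1m : c1 ≤ m := by omega
    have hα : a0 / b ^ d < b := by
      rw [Nat.div_lt_iff_lt_mul (pow_pos hb _), mul_comm, ← pow_succ]
      exact ha0
    have hβ : a0 % b ^ d < b ^ d := Nat.mod_lt _ (pow_pos hb _)
    obtain ⟨t, ⟨htm, ht0, ht1⟩, htu⟩ :=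
      (hT ⟨a0 / b ^ d, hα⟩).2 d c1 hdc (a0 % b ^ d) a1 hβ ha1
    have hsub0 : m + 1 - (d + 1) = m - d := by omega
    have hsub1 : m + 1 - c1 = (m - c1) + 1 := by omega
    refine ⟨_, ⟨(mem_psi b m hbm T g _).2 ⟨⟨a0 / b ^ d, hα⟩, t, htm, rfl⟩, ?_, ?_⟩, ?_⟩
    · rw [enc2_zero, hsub0, div_pow_add b m d _ _ (by omega) hb, ht0, mul_comm]
      exact Nat.div_add_mod a0 (b ^ d)
    · rw [enc2_one, hsub1, div_pow_succ b _ _ _ hb (g _ _).isLt, ht1]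
    · rintro k' ⟨hk', hk'0, hk'1⟩
      obtain ⟨a', t', ht', rfl⟩ := (mem_psi b m hbm T g k').1 hk'
      rw [enc2_zero, hsub0, div_pow_add b m d _ _ (by omega) hb] at hk'0
      rw [enc2_one, hsub1, div_pow_succ b _ _ _ hb (g _ _).isLt] at hk'1
      have ht'0lt : t' 0 / b ^ (m - d) < b ^ d := by
        rw [Nat.div_lt_iff_lt_mul (pow_pos hb _), ← pow_add, show d + (m - d) = m by omega]
        exact (hT a').1 t' ht' 0
      have hsplit := base_eq (b ^ d) (a' : ℕ) (t' 0 / b ^ (m - d))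
        (a0 / b ^ d) (a0 % b ^ d) (pow_pos hb _) ht'0lt hβ
        (by rw [hk'0, mul_comm]; exact (Nat.div_add_mod a0 (b ^ d)).symm)
      have ha' : a' = ⟨a0 / b ^ d, hα⟩ := Fin.ext hsplit.1
      subst ha'
      have ht'eq : t' = t := htu t' ⟨ht', hsplit.2, hk'1⟩
      rw [ht'eq]

lemma enc2_eq {A B A' B' : ℕ} (h : enc2 A B = enc2 A' B') : A = A' ∧ B = B' :=
  ⟨congrFun h 0, congrFun h 1⟩

lemma key_unique (b m : ℕ) (hb : 1 ≤ b) (S : Finset (Fin 2 → ℕ)) (hS : DigPat b (m + 1) S)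
    (a : Fin b) (q : ℕ) (hq : q < b ^ m) :
    ∃! k, k ∈ S ∧ k 0 / b ^ m = (a : ℕ) ∧ k 1 / b = q := by
  have h := hS.2 1 m (by omega) (a : ℕ) q (by simpa using a.isLt) hq
  have e1 : m + 1 - 1 = m := by omega
  have e2 : m + 1 - m = 1 := by omega
  rw [e1, e2, pow_one] at h
  exact h

lemma psi_surj (b m : ℕ) (hb : 1 ≤ b) (hbm : 0 < b ^ m) (S : Finset (Fin 2 → ℕ))
    (hS : DigPat b (m + 1) S) :
    ∃ (T : Fin b → Finset (Fin 2 → ℕ)) (g : Fin (b ^ m) → Fin b → Fin b),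
      (∀ a, DigPat b m (T a)) ∧ (∀ q, Function.Bijective (g q)) ∧ psi b m hbm T g = S := by
  classical
  have hb1 : 0 < b := hb
  have hbm1 : 0 < b ^ (m + 1) := pow_pos hb1 _
  have hdiv : ∀ k ∈ S, k 0 / b ^ m < b := by
    intro k hk
    rw [Nat.div_lt_iff_lt_mul hbm, ← pow_succ']
    exact hS.1 k hk 0
  have hdiv1 : ∀ k ∈ S, k 1 / b < b ^ m := by
    intro k hk
    rw [Nat.div_lt_iff_lt_mul hb1, ← pow_succ]
    exact hS.1 k hk 1
  set T : Fin b → Finset (Fin 2 → ℕ) := fun a =>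
    (S.filter fun k => k 0 / b ^ m = (a : ℕ)).image fun k => enc2 (k 0 % b ^ m) (k 1 / b)
    with hT
  set g : Fin (b ^ m) → Fin b → Fin b := fun q a =>
    ⟨(S.choose (fun k => k 0 / b ^ m = (a : ℕ) ∧ k 1 / b = (q : ℕ))
        (key_unique b m hb S hS a q q.isLt)) 1 % b, Nat.mod_lt _ hb1⟩ with hg
  have hchoose : ∀ (a : Fin b) (q : Fin (b ^ m)) (k : Fin 2 → ℕ), k ∈ S →
      k 0 / b ^ m = (a : ℕ) → k 1 / b = (q : ℕ) →
      S.choose (fun k => k 0 / b ^ m = (a : ℕ) ∧ k 1 / b = (q : ℕ))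
        (key_unique b m hb S hS a q q.isLt) = k := by
    intro a q k hk h1 h2
    have hm := Finset.choose_mem (fun k => k 0 / b ^ m = (a : ℕ) ∧ k 1 / b = (q : ℕ)) S
      (key_unique b m hb S hS a q q.isLt)
    have hp := Finset.choose_property (fun k => k 0 / b ^ m = (a : ℕ) ∧ k 1 / b = (q : ℕ)) S
      (key_unique b m hb S hS a q q.isLt)
    exact (key_unique b m hb S hS a q q.isLt).unique ⟨hm, hp⟩ ⟨hk, h1, h2⟩
  have hTdig : ∀ a, DigPat b m (T a) := by
    intro a
    constructor
    · intro t ht j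
      obtain ⟨k, hk, rfl⟩ := Finset.mem_image.1 ht
      rw [Finset.mem_filter] at hk
      fin_cases j
      · simpa using Nat.mod_lt _ hbm
      · simpa using hdiv1 k hk.1
    · intro d c1 hdc β a1 hβ ha1
      obtain ⟨k, ⟨hkS, hk0, hk1⟩, hku⟩ := hS.2 (d + 1) c1 (by omega)
        ((a : ℕ) * b ^ d + β) a1
        (by rw [pow_succ']; exact encode_lt _ _ _ _ a.isLt hβ) ha1
      have hsub0 : m + 1 - (d + 1) = m - d := by omega
      have hsub1 : m + 1 - c1 = (m - c1) + 1 := by omega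
      have hdm : d ≤ m := by omega
      rw [hsub0] at hk0
      rw [hsub1] at hk1
      have hk0m : k 0 / b ^ m = (a : ℕ) := by
        have e : k 0 / b ^ m = (k 0 / b ^ (m - d)) / b ^ d := by
          rw [Nat.div_div_eq_div_mul, ← pow_add, Nat.sub_add_cancel hdm]
        rw [e, hk0, pfDivAdd _ _ _ (pow_pos hb1 _) hβ]
      have hdec0 : (a : ℕ) * b ^ m + k 0 % b ^ m = k 0 := by
        rw [← hk0m, mul_comm]; exact Nat.div_add_mod _ _
      have hmodlt : k 0 % b ^ m < b ^ m := Nat.mod_lt _ hbm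
      have ht0val : (k 0 % b ^ m) / b ^ (m - d) = β := by
        rw [← hdec0, div_pow_add b m d _ _ hdm hb1] at hk0
        exact Nat.add_left_cancel hk0
      have ht1val : (k 1 / b) / b ^ (m - c1) = a1 := by
        rw [Nat.div_div_eq_div_mul, ← pow_succ']
        exact hk1
      refine ⟨enc2 (k 0 % b ^ m) (k 1 / b),
        ⟨Finset.mem_image.2 ⟨k, Finset.mem_filter.2 ⟨hkS, hk0m⟩, rfl⟩, ?_, ?_⟩, ?_⟩
      · rw [enc2_zero]; exact ht0val
      · rw [enc2_one]; exact ht1val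
      · rintro t' ⟨ht', h0', h1'⟩
        obtain ⟨k', hk'f, rfl⟩ := Finset.mem_image.1 ht'
        rw [Finset.mem_filter] at hk'f
        obtain ⟨hk'S, hk'a⟩ := hk'f
        rw [enc2_zero] at h0'
        rw [enc2_one] at h1'
        have hdec0' : (a : ℕ) * b ^ m + k' 0 % b ^ m = k' 0 := by
          rw [← hk'a, mul_comm]; exact Nat.div_add_mod _ _
        simp only [hsub0, hsub1] at hku
        have hk'cond0 : k' 0 / b ^ (m - d) = (a : ℕ) * b ^ d + β := by
          rw [← hdec0', div_pow_add b m d _ _ hdm hb1, h0']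
        have hk'cond1 : k' 1 / b ^ ((m - c1) + 1) = a1 := by
          rw [pow_succ', ← Nat.div_div_eq_div_mul]
          exact h1'
        have := hku k' ⟨hk'S, hk'cond0, hk'cond1⟩
        rw [this]
  refine ⟨T, g, hTdig, ?_, ?_⟩
  · intro q
    have hinj : Function.Injective (g q) := by
      intro a a' h
      set p := fun k : Fin 2 → ℕ => k 0 / b ^ m = (a : ℕ) ∧ k 1 / b = (q : ℕ) with hp
      set p' := fun k : Fin 2 → ℕ => k 0 / b ^ m = (a' : ℕ) ∧ k 1 / b = (q : ℕ) with hp'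
      set k := S.choose p (key_unique b m hb S hS a q q.isLt) with hkdef
      set k' := S.choose p' (key_unique b m hb S hS a' q q.isLt) with hk'def
      have hkS : k ∈ S := Finset.choose_mem _ _ _
      have hkP : p k := Finset.choose_property _ _ _
      have hk'S : k' ∈ S := Finset.choose_mem _ _ _
      have hk'P : p' k' := Finset.choose_property _ _ _
      have hmod : k 1 % b = k' 1 % b := by
        have := congrArg Fin.val h
        simpa [hg, ← hkdef, ← hk'def] using this
      have h1eq : k 1 = k' 1 := by
        have e1 : k 1 = (q : ℕ) * b + k 1 % b := by
          rw [← hkP.2, mul_comm]; exact (Nat.div_add_mod _ _).symm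
        have e2 : k' 1 = (q : ℕ) * b + k' 1 % b := by
          rw [← hk'P.2, mul_comm]; exact (Nat.div_add_mod _ _).symm
        rw [e1, e2, hmod]
      obtain ⟨w, hw, hwu⟩ := hS.2 0 (m + 1) (by omega) 0 (k 1)
        (by simpa using Nat.one_pos) (hS.1 k hkS 1)
      have hkw : k = w := hwu k ⟨hkS, by
        simpa using Nat.div_eq_of_lt (hS.1 k hkS 0), by simp⟩
      have hk'w : k' = w := hwu k' ⟨hk'S, by
        simpa using Nat.div_eq_of_lt (hS.1 k' hk'S 0), by simp [← h1eq]⟩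
      apply Fin.ext
      rw [← hkP.1, ← hk'P.1, hkw, hk'w]
    exact (Finite.injective_iff_bijective).1 hinj
  · apply Finset.ext
    intro k
    constructor
    · intro hk
      obtain ⟨a, t, ht, rfl⟩ := (mem_psi b m hbm T g k).1 hk
      obtain ⟨k', hk'f, rfl⟩ := Finset.mem_image.1 ht
      rw [Finset.mem_filter] at hk'f
      obtain ⟨hk'S, hk'a⟩ := hk'f
      have hq' : k' 1 / b < b ^ m := hdiv1 k' hk'S
      have hfin : (⟨k' 1 / b % b ^ m, Nat.mod_lt _ hbm⟩ : Fin (b ^ m))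
          = ⟨k' 1 / b, hq'⟩ := by
        apply Fin.ext
        simp [Nat.mod_eq_of_lt hq']
      have hch := hchoose a ⟨k' 1 / b, hq'⟩ k' hk'S hk'a rfl
      have hgval : (g (⟨k' 1 / b % b ^ m, Nat.mod_lt _ hbm⟩) a : ℕ)
          = k' 1 % b := by
        rw [hfin, hg]
        simp only []
        rw [hch]
      have heq : enc2 ((a : ℕ) * b ^ m + enc2 (k' 0 % b ^ m) (k' 1 / b) 0)
          (enc2 (k' 0 % b ^ m) (k' 1 / b) 1 * b
            + (g (⟨enc2 (k' 0 % b ^ m) (k' 1 / b) 1 % b ^ m, Nat.mod_lt _ hbm⟩) a : ℕ)) = k' := by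
        apply fin2_ext
        · rw [enc2_zero, enc2_zero, ← hk'a, mul_comm]
          exact Nat.div_add_mod _ _
        · rw [enc2_one, enc2_one, hgval, mul_comm]
          exact Nat.div_add_mod _ _
      rw [heq]

      exact hk'S
    · intro hk
      have ha : k 0 / b ^ m < b := hdiv k hk
      have hq' : k 1 / b < b ^ m := hdiv1 k hk
      apply (mem_psi b m hbm T g k).2
      refine ⟨⟨k 0 / b ^ m, ha⟩, enc2 (k 0 % b ^ m) (k 1 / b),
        Finset.mem_image.2 ⟨k, Finset.mem_filter.2 ⟨hk, rfl⟩, rfl⟩, ?_⟩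
      have hfin : (⟨k 1 / b % b ^ m, Nat.mod_lt _ hbm⟩ : Fin (b ^ m))
          = ⟨k 1 / b, hq'⟩ := by
        apply Fin.ext
        simp [Nat.mod_eq_of_lt hq']
      have hch := hchoose ⟨k 0 / b ^ m, ha⟩ ⟨k 1 / b, hq'⟩ k hk rfl rfl
      have hgval : (g (⟨k 1 / b % b ^ m, Nat.mod_lt _ hbm⟩)
          ⟨k 0 / b ^ m, ha⟩ : ℕ) = k 1 % b := by
        rw [hfin, hg]
        simp only []
        rw [hch]
      refine (fin2_ext ?_ ?_).symm
      · rw [enc2_zero, enc2_zero]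
        show k 0 / b ^ m * b ^ m + k 0 % b ^ m = k 0
        rw [mul_comm]
        exact Nat.div_add_mod _ _
      · rw [enc2_one, enc2_one, hgval]
        rw [mul_comm]
        exact Nat.div_add_mod _ _

lemma psi_inj_aux (b m : ℕ) (hb : 1 ≤ b) (hbm : 0 < b ^ m)
    (T T' : Fin b → Finset (Fin 2 → ℕ)) (g g' : Fin (b ^ m) → Fin b → Fin b)
    (hT : ∀ a, DigPat b m (T a)) (hT' : ∀ a, DigPat b m (T' a))
    (h : psi b m hbm T g = psi b m hbm T' g') :
    ∀ (a : Fin b) (t : Fin 2 → ℕ), t ∈ T a → t ∈ T' a ∧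
      g ⟨t 1 % b ^ m, Nat.mod_lt _ hbm⟩ a = g' ⟨t 1 % b ^ m, Nat.mod_lt _ hbm⟩ a := by
  intro a t ht
  have hmem : enc2 ((a : ℕ) * b ^ m + t 0)
      (t 1 * b + (g ⟨t 1 % b ^ m, Nat.mod_lt _ hbm⟩ a : ℕ)) ∈ psi b m hbm T' g' := by
    rw [← h]
    exact (mem_psi b m hbm T g _).2 ⟨a, t, ht, rfl⟩
  obtain ⟨a', t', ht', heq⟩ := (mem_psi b m hbm T' g' _).1 hmem
  obtain ⟨h0, h1⟩ := enc2_eq heq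
  have ht0 := (hT a).1 t ht 0
  have ht1 := (hT a).1 t ht 1
  have ht'0 := (hT' a').1 t' ht' 0
  have ht'1 := (hT' a').1 t' ht' 1
  obtain ⟨ha, h00⟩ := base_eq (b ^ m) (a : ℕ) (t 0) (a' : ℕ) (t' 0) hbm ht0 ht'0 h0
  obtain ⟨h11, hs⟩ := base_eq b (t 1) _ (t' 1) _ hb (g _ a).isLt (g' _ a').isLt h1
  have ha' : a' = a := Fin.ext ha.symm
  subst ha'
  have ht'eq : t' = t := fin2_ext h00.symm h11.symm
  subst ht'eq
  refine ⟨ht', ?_⟩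
  apply Fin.ext
  exact hs

lemma psi_inj (b m : ℕ) (hb : 1 ≤ b) (hbm : 0 < b ^ m)
    (T T' : Fin b → Finset (Fin 2 → ℕ)) (g g' : Fin (b ^ m) → Fin b → Fin b)
    (hT : ∀ a, DigPat b m (T a)) (hT' : ∀ a, DigPat b m (T' a))
    (h : psi b m hbm T g = psi b m hbm T' g') : T = T' ∧ g = g' := by
  have haux := psi_inj_aux b m hb hbm T T' g g' hT hT' h
  have haux' := psi_inj_aux b m hb hbm T' T g' g hT' hT h.symm
  have hTT : T = T' := by
    funext a
    apply Finset.ext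
    intro t
    exact ⟨fun ht => (haux a t ht).1, fun ht => (haux' a t ht).1⟩
  refine ⟨hTT, ?_⟩
  funext q a
  obtain ⟨t, ⟨ht, _, ht1⟩, _⟩ := (hT a).2 0 m (by omega) 0 (q : ℕ)
    (by simpa using Nat.one_pos) q.isLt
  have ht1' : t 1 = (q : ℕ) := by simpa using ht1
  have hfin : (⟨t 1 % b ^ m, Nat.mod_lt _ hbm⟩ : Fin (b ^ m)) = q := by
    apply Fin.ext
    simp [ht1', Nat.mod_eq_of_lt q.isLt]
  have := (haux a t ht).2
  rwa [hfin] at this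

lemma digPat_zero (b : ℕ) (S : Finset (Fin 2 → ℕ)) :
    DigPat b 0 S ↔ S = {fun _ : Fin 2 => (0 : ℕ)} := by
  constructor
  · rintro ⟨hbd, hex⟩
    obtain ⟨w, ⟨hw, _, _⟩, _⟩ := hex 0 0 rfl 0 0 (by simp) (by simp)
    have hall : ∀ k ∈ S, k = fun _ : Fin 2 => (0 : ℕ) := by
      intro k hk
      funext j
      have := hbd k hk j
      simpa using this
    apply Finset.ext
    intro k
    simp only [Finset.mem_singleton]
    constructor
    · exact hall k
    · rintro rfl
      rwa [← hall w hw]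
  · rintro rfl
    constructor
    · intro k hk j
      simp at hk
      simp [hk]
    · intro c0 c1 hc a0 a1 ha0 ha1
      have hc0 : c0 = 0 := by omega
      have hc1 : c1 = 0 := by omega
      subst hc0; subst hc1
      simp only [pow_zero] at ha0 ha1
      have ha0' : a0 = 0 := by omega
      have ha1' : a1 = 0 := by omega
      subst ha0'; subst ha1'
      refine ⟨fun _ => 0, ⟨Finset.mem_singleton_self _, by simp, by simp⟩, ?_⟩
      rintro k ⟨hk, _, _⟩
      simpa using hk

def bijFinSet (b : ℕ) : Set (Fin b → Fin b) := {f | Function.Bijective f}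

lemma card_bijFinSet (b : ℕ) : Nat.card (bijFinSet b) = Nat.factorial b := by
  have e : bijFinSet b ≃ (Fin b ≃ Fin b) :=
    { toFun := fun f => Equiv.ofBijective f.1 f.2
      invFun := fun e => ⟨e, e.bijective⟩
      left_inv := fun f => Subtype.ext rfl
      right_inv := fun e => Equiv.ext fun x => rfl }
  rw [Nat.card_congr e, Nat.card_eq_fintype_card]
  calc Fintype.card (Fin b ≃ Fin b) = (Fintype.card (Fin b)).factorial := Fintype.card_perm
    _ = Nat.factorial b := by rw [Fintype.card_fin]

lemma exp_id (b m : ℕ) : m * b ^ (m - 1) * b + b ^ m = (m + 1) * b ^ m := by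
  cases m with
  | zero => simp
  | succ n =>
    show (n + 1) * b ^ n * b + b ^ (n + 1) = (n + 2) * b ^ (n + 1)
    rw [pow_succ]
    ring

lemma digPat_count (b : ℕ) (hb : 1 ≤ b) (m : ℕ) :
    Set.ncard {S | DigPat b m S} = (Nat.factorial b) ^ (m * b ^ (m - 1)) := by
  induction m with
  | zero =>
    have : {S | DigPat b 0 S} = {({fun _ : Fin 2 => (0 : ℕ)} : Finset (Fin 2 → ℕ))} := by
      ext S
      simp [digPat_zero]
    rw [this]
    simp
  | succ m ih =>
    have hbm : 0 < b ^ m := pow_pos hb m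
    set Dset : Set ((Fin b → Finset (Fin 2 → ℕ)) × (Fin (b ^ m) → Fin b → Fin b)) :=
      {d | (∀ a, DigPat b m (d.1 a)) ∧ ∀ q, Function.Bijective (d.2 q)} with hD
    have hbij : Set.BijOn (fun d => psi b m hbm d.1 d.2) Dset {S | DigPat b (m + 1) S} := by
      refine ⟨?_, ?_, ?_⟩
      · rintro ⟨T, g⟩ ⟨h1, h2⟩
        exact psi_digPat b m hb hbm T g h1 h2
      · rintro ⟨T, g⟩ ⟨h1, h2⟩ ⟨T', g'⟩ ⟨h1', h2'⟩ heq
        obtain ⟨e1, e2⟩ := psi_inj b m hb hbm T T' g g' h1 h1' heq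
        simp [e1, e2]
      · intro S hS
        obtain ⟨T, g, h1, h2, h3⟩ := psi_surj b m hb hbm S hS
        exact ⟨(T, g), ⟨h1, h2⟩, h3⟩
    have hcardeq : Set.ncard {S | DigPat b (m + 1) S} = Set.ncard Dset := by
      rw [← Nat.card_coe_set_eq, ← Nat.card_coe_set_eq]
      exact (Nat.card_congr (Set.BijOn.equiv _ hbij)).symm
    have hDeq : Nat.card Dset =
        Nat.card (Fin b → {S : Finset (Fin 2 → ℕ) // DigPat b m S}) *
        Nat.card (Fin (b ^ m) → bijFinSet b) := by
      rw [← Nat.card_prod]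
      apply Nat.card_congr
      exact
        { toFun := fun d => (fun a => ⟨d.1.1 a, d.2.1 a⟩, fun q => ⟨d.1.2 q, d.2.2 q⟩)
          invFun := fun p => ⟨(fun a => (p.1 a).1, fun q => (p.2 q).1),
            fun a => (p.1 a).2, fun q => (p.2 q).2⟩
          left_inv := fun d => rfl
          right_inv := fun p => rfl }
    have h1 : Nat.card {S : Finset (Fin 2 → ℕ) // DigPat b m S} =
        (Nat.factorial b) ^ (m * b ^ (m - 1)) := by
      rw [← ih, ← Nat.card_coe_set_eq]
      rfl
    rw [hcardeq, ← Nat.card_coe_set_eq]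
    have := Nat.card_coe_set_eq Dset
    rw [hDeq, Nat.card_fun, Nat.card_fun, h1, card_bijFinSet,
      Nat.card_eq_fintype_card, Nat.card_eq_fintype_card, Fintype.card_fin, Fintype.card_fin,
      ← pow_mul, ← pow_add, exp_id, Nat.succ_sub_one]

/-- `a_{b,d}(m)`: the number of admissible patterns. -/
noncomputable def patternCount (b d m : ℕ) : ℕ := Set.ncard {S | Admissible b m d S}

theorem stmt0 (b : ℕ) (hb : 2 ≤ b) :
    patternCount b 2 0 = 1 ∧
    (∀ m : ℕ, 1 ≤ m →
      patternCount b 2 m = (patternCount b 2 (m - 1)) ^ b * (Nat.factorial b) ^ (b ^ (m - 1))) ∧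
    (∀ m : ℕ, patternCount b 2 m = (Nat.factorial b) ^ (m * b ^ (m - 1))) := by
  have hb1 : 1 ≤ b := by omega
  have hmain : ∀ m, patternCount b 2 m = (Nat.factorial b) ^ (m * b ^ (m - 1)) := by
    intro m
    have hset : {S | Admissible b m 2 S} = {S | DigPat b m S} :=
      Set.ext fun S => admissible_iff b m hb1 S
    rw [patternCount, hset, digPat_count b hb1 m]
  refine ⟨?_, ?_, hmain⟩
  · rw [hmain 0]; simp
  · intro m hm
    rw [hmain m, hmain (m - 1), ← pow_mul, ← pow_add]
    congr 1
    obtain ⟨n, rfl⟩ : ∃ n, m = n + 1 := ⟨m - 1, by omega⟩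
    simp only [Nat.add_sub_cancel]
    exact (exp_id b n).symm
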